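/- Let E be a Banach lattice f-algebra with a quasi-interior point e, and let (x_α) be a decreasing net in E with x_α ≥ 0. Then (x_α) is mn-convergent to 0 if and only if ‖x_α e‖ → 0. -/

import Mathlib

open Filter

class BanachLatticeFAlgebra (E : Type*) extends NonUnitalNormedRing E, Lattice E where
  add_le_add_left : ∀ a b : E, a ≤ b → ∀ c : E, c + a ≤ c + b
  mul_nonneg : ∀ a b : E, 0 ≤ a → 0 ≤ b → 0 ≤ a * b
  inf_mul_right : ∀ a b c : E, 0 ≤ c → a ⊓ b = 0 → (a * c) ⊓ b = 0
  inf_mul_left : ∀ a b c : E, 0 ≤ c → a ⊓ b = 0 → (c * a) ⊓ b = 0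
  archimedean : ∀ a b : E, 0 ≤ a → (∀ n : ℕ, n • a ≤ b) → a ≤ 0
  solid_norm : ∀ a b : E, a ⊔ -a ≤ b ⊔ -b → ‖a‖ ≤ ‖b‖

/-- The lattice absolute value `|x| = x ⊔ (-x)`. -/
def latAbs {E : Type*} [BanachLatticeFAlgebra E] (x : E) : E := x ⊔ -x

/-- A net `x` is multiplicative norm (mn-) convergent to `x₀` along the filter `l`
if `‖|x i - x₀| u‖ → 0` for every positive `u`. -/
def MnTendsto {E : Type*} [BanachLatticeFAlgebra E] {ι : Type*} (l : Filter ι)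
    (x : ι → E) (x₀ : E) : Prop :=
  ∀ u : E, 0 ≤ u → Tendsto (fun i => ‖latAbs (x i - x₀) * u‖) l (nhds 0)

section Aux

variable {E : Type*} [BanachLatticeFAlgebra E]

instance : CovariantClass E E (· + ·) (· ≤ ·) :=
  ⟨fun c a b h => BanachLatticeFAlgebra.add_le_add_left a b h c⟩

instance : CovariantClass E E (Function.swap (· + ·)) (· ≤ ·) :=
  ⟨fun c a b h => by
    simpa [add_comm] using BanachLatticeFAlgebra.add_le_add_left a b h c⟩

lemma nsmul_nonneg'' (n : ℕ) {a : E} (ha : 0 ≤ a) : 0 ≤ n • a := by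
  induction n with
  | zero => simp
  | succ n ih => rw [succ_nsmul]; exact add_nonneg ih ha

lemma mul_le_mul_left'' {a b c : E} (h : a ≤ b) (hc : 0 ≤ c) : c * a ≤ c * b := by
  have h0 := BanachLatticeFAlgebra.mul_nonneg c (b - a) hc (sub_nonneg.2 h)
  rw [mul_sub] at h0
  exact sub_nonneg.mp h0

lemma norm_mono'' {a b : E} (ha : 0 ≤ a) (h : a ≤ b) : ‖a‖ ≤ ‖b‖ := by
  apply BanachLatticeFAlgebra.solid_norm
  have hb : 0 ≤ b := ha.trans h
  have hna : -a ≤ (0 : E) := neg_nonpos.2 ha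
  exact sup_le (h.trans le_sup_left) ((hna.trans hb).trans le_sup_left)

lemma latAbs_of_nonneg'' {a : E} (ha : 0 ≤ a) : latAbs a = a :=
  sup_eq_left.2 ((neg_nonpos.2 ha).trans ha)

end Aux

variable {E : Type*} [BanachLatticeFAlgebra E] [CompleteSpace E]
variable {A : Type*} [Preorder A] [Nonempty A] [IsDirected A (· ≤ ·)]

/-- For a positive decreasing net in a Banach lattice `f`-algebra with a
quasi-interior point `e`, mn-convergence to `0` is equivalent to `‖x_α e‖ → 0`. -/
theorem mnTendsto_iff_mul_quasiInterior (e : E) (he : 0 ≤ e)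
    (hq : ∀ v : E, 0 ≤ v → Tendsto (fun n : ℕ => ‖v - v ⊓ (n • e)‖) atTop (nhds 0))
    (x : A → E) (hpos : ∀ a, 0 ≤ x a) (hdec : Antitone x) :
    MnTendsto atTop x 0 ↔ Tendsto (fun a => ‖x a * e‖) atTop (nhds 0) := by
  have heq : ∀ a : A, latAbs (x a - 0) = x a := fun a => by
    rw [sub_zero, latAbs_of_nonneg'' (hpos a)]
  constructor
  · intro h
    have h1 := h e he
    simpa only [heq] using h1
  · intro h u hu
    simp only [heq]
    rw [NormedAddCommGroup.tendsto_nhds_zero]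
    intro ε hε
    obtain ⟨a₀⟩ := ‹Nonempty A›
    set M : ℝ := ‖x a₀‖ + 1 with hM
    have hMpos : 0 < M := by positivity
    obtain ⟨n, hn⟩ := ((hq u hu).eventually
      (gt_mem_nhds (show (0:ℝ) < ε / (2 * M) by positivity))).exists
    have h2 : ∀ᶠ a in atTop, ‖x a * e‖ < ε / (2 * (n + 1)) :=
      h.eventually (gt_mem_nhds (by positivity))
    filter_upwards [h2, eventually_ge_atTop a₀] with a hae haa
    have hxa : 0 ≤ x a := hpos a
    have hxaM : ‖x a‖ ≤ M := le_trans (norm_mono'' hxa (hdec haa)) (by simp [hM])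
    have hinfpos : (0 : E) ≤ u ⊓ (n • e) := le_inf hu (nsmul_nonneg'' n he)
    have hsplit : x a * u = x a * (u - u ⊓ (n • e)) + x a * (u ⊓ (n • e)) := by
      rw [mul_sub]; abel
    have hterm1 : ‖x a * (u - u ⊓ (n • e))‖ ≤ M * (ε / (2 * M)) :=
      le_trans (norm_mul_le _ _) (mul_le_mul hxaM hn.le (norm_nonneg _) hMpos.le)
    have hterm2 : ‖x a * (u ⊓ (n • e))‖ ≤ (n : ℝ) * ‖x a * e‖ := by
      have h1 : x a * (u ⊓ (n • e)) ≤ n • (x a * e) := by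
        rw [← mul_smul_comm]
        exact mul_le_mul_left'' inf_le_right hxa
      exact le_trans
        (norm_mono'' (BanachLatticeFAlgebra.mul_nonneg _ _ hxa hinfpos) h1)
        norm_nsmul_le
    have hM2 : M * (ε / (2 * M)) = ε / 2 := by field_simp
    have hn2 : (n : ℝ) * ‖x a * e‖ < ε / 2 := by
      have hle : (n : ℝ) * ‖x a * e‖ ≤ ((n : ℝ) + 1) * ‖x a * e‖ := by
        have := norm_nonneg (x a * e)
        nlinarith [Nat.cast_nonneg (α := ℝ) n]
      have hlt : ((n : ℝ) + 1) * ‖x a * e‖ < ((n : ℝ) + 1) * (ε / (2 * (n + 1))) := by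
        apply mul_lt_mul_of_pos_left hae
        positivity
      have heq2 : ((n : ℝ) + 1) * (ε / (2 * (n + 1))) = ε / 2 := by
        field_simp
      linarith
    rw [norm_norm]
    calc ‖x a * u‖
        = ‖x a * (u - u ⊓ (n • e)) + x a * (u ⊓ (n • e))‖ := by rw [← hsplit]
      _ ≤ ‖x a * (u - u ⊓ (n • e))‖ + ‖x a * (u ⊓ (n • e))‖ := norm_add_le _ _
      _ < ε := by linarith
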